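/- Assume κ_n ≠ 0 for all n ≥ 0 and κ_n ≠ κ_{n−1} for all n ≥ 1. Then for every n ≥ 1 the polynomial identities (r_n(b_n − a_{n+1}) − ξ_n(β_n + α_n a_{n+1})) · P_n(z) = r_n(1 − ξ_n) · (S_{n+1}(z) − (z − b_n)S_n(z)) and (r_n(a_n − b_{n+1}) − ξ_n(β_n + α_n b_{n+1})) · P_n(z) = r_n(1 − ξ_n) · (T_{n+1}(z) − (z − a_n)T_n(z)) hold. -/

import Mathlib

open Polynomial

/-- Expression of `P_n` in terms of `S_n, S_{n+1}` (resp. `T_n, T_{n+1}`):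
cleared-denominator forms of the relations
`P_n = ζ_n^{(1)}(S_{n+1} - (z - b_n) S_n)` and
`P_n = ζ_n^{(2)}(T_{n+1} - (z - a_n) T_n)`. -/
theorem stmt5 (a b β r α κ ξ : ℕ → ℂ) (P S T : ℕ → Polynomial ℂ)
    (hr : ∀ n, 1 ≤ n → r n ≠ 0)
    (hα0 : α 0 = -1) (hα : ∀ n, 1 ≤ n → α n = -(1 + r n))
    (hP0 : P 0 = 1) (hP1 : P 1 = X - C (β 0))
    (hPrec : ∀ n, 1 ≤ n →
      P (n + 1) + (C (α n) * X + C (β n)) * P n +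
        C (r n) * (X - C (a n)) * (X - C (b n)) * P (n - 1) = 0)
    (hκrec : ∀ n, 1 ≤ n → κ (n + 1) + α n * κ n + r n * κ (n - 1) = 0)
    (hκ0 : ∀ n, κ n ≠ 0) (hκne : ∀ n, 1 ≤ n → κ n ≠ κ (n - 1))
    (hξ : ∀ n, 1 ≤ n → ξ n = κ n / κ (n - 1))
    (hS : ∀ n, 1 ≤ n →
      S n = C (1 - ξ n)⁻¹ * (P n - C (ξ n) * (X - C (a n)) * P (n - 1)))
    (hT : ∀ n, 1 ≤ n →
      T n = C (1 - ξ n)⁻¹ * (P n - C (ξ n) * (X - C (b n)) * P (n - 1))) :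
    ∀ n, 1 ≤ n →
      C (r n * (b n - a (n + 1)) - ξ n * (β n + α n * a (n + 1))) * P n =
        C (r n * (1 - ξ n)) * (S (n + 1) - (X - C (b n)) * S n) ∧
      C (r n * (a n - b (n + 1)) - ξ n * (β n + α n * b (n + 1))) * P n =
        C (r n * (1 - ξ n)) * (T (n + 1) - (X - C (a n)) * T n) := by
  intro n hn
  have hξn : ξ n = κ n / κ (n - 1) := hξ n hn
  have hξn1 : ξ (n + 1) = κ (n + 1) / κ n := by
    have := hξ (n + 1) (by omega); simpa using this
  have hu : (1 : ℂ) - ξ n ≠ 0 := by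
    rw [hξn]
    intro h
    apply hκne n hn
    exact (div_eq_one_iff_eq (hκ0 (n-1))).mp (sub_eq_zero.mp h).symm
  have hv : (1 : ℂ) - ξ (n+1) ≠ 0 := by
    rw [hξn1]
    intro h
    apply hκne (n+1) (by omega)
    simpa using (div_eq_one_iff_eq (hκ0 n)).mp (sub_eq_zero.mp h).symm
  have hκr : κ (n + 1) + α n * κ n + r n * κ (n - 1) = 0 := hκrec n hn
  have f1 : ξ n * ξ (n + 1) = -(α n * ξ n + r n) := by
    rw [hξn, hξn1]
    have k0 := hκ0 (n-1); have k1 := hκ0 n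
    field_simp
    linear_combination hκr
  have f2 : ξ n * (1 - ξ (n + 1)) = r n * (1 - ξ n) := by
    linear_combination (-1 : ℂ) * f1 + ξ n * hα n hn
  have h1 : C (1 - ξ n) * S n = P n - C (ξ n) * (X - C (a n)) * P (n - 1) := by
    rw [hS n hn, ← mul_assoc, ← C_mul, mul_inv_cancel₀ hu, map_one, one_mul]
  have h1T : C (1 - ξ n) * T n = P n - C (ξ n) * (X - C (b n)) * P (n - 1) := by
    rw [hT n hn, ← mul_assoc, ← C_mul, mul_inv_cancel₀ hu, map_one, one_mul]
  have h2 : C (1 - ξ (n+1)) * S (n+1) = P (n+1) - C (ξ (n+1)) * (X - C (a (n+1))) * P n := by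
    have := hS (n+1) (by omega)
    rw [this, ← mul_assoc, ← C_mul, mul_inv_cancel₀ hv, map_one, one_mul]
    simp
  have h2T : C (1 - ξ (n+1)) * T (n+1) = P (n+1) - C (ξ (n+1)) * (X - C (b (n+1))) * P n := by
    have := hT (n+1) (by omega)
    rw [this, ← mul_assoc, ← C_mul, mul_inv_cancel₀ hv, map_one, one_mul]
    simp
  have h3 := hPrec n hn
  have hC : (C ((1 - ξ n) * (1 - ξ (n+1))) : Polynomial ℂ) ≠ 0 := by
    exact C_ne_zero.mpr (mul_ne_zero hu hv)
  have E1 : (C (ξ n * (1 - ξ (n+1))) : Polynomial ℂ) = C (r n * (1 - ξ n)) := by rw [f2]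
  have E2 : (C (ξ n * ξ (n+1)) : Polynomial ℂ) = C (-(α n * ξ n + r n)) := by rw [f1]
  simp only [map_sub, map_one] at h1 h1T h2 h2T
  constructor
  · apply mul_left_cancel₀ hC
    simp only [map_mul, map_sub, map_add, map_one, map_neg] at E1 E2 ⊢
    linear_combination
      C (r n) * (1 - C (ξ n)) * (1 - C (ξ (n+1))) * (X - C (b n)) * h1
      - C (r n) * (1 - C (ξ n))^2 * h2
      - C (r n) * (1 - C (ξ n))^2 * h3
      + (- (C (r n) * (1 - C (ξ n)) * (X - C (a n)) * (X - C (b n)) * P (n-1))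
         - (1 - C (ξ n)) * (C (ξ (n+1)) * (X - C (a (n+1))) + C (α n) * X + C (β n)) * P n) * E1
      + (1 - C (ξ n)) * (1 - C (ξ (n+1))) * (X - C (a (n+1))) * P n * E2
  · apply mul_left_cancel₀ hC
    simp only [map_mul, map_sub, map_add, map_one, map_neg] at E1 E2 ⊢
    linear_combination
      C (r n) * (1 - C (ξ n)) * (1 - C (ξ (n+1))) * (X - C (a n)) * h1T
      - C (r n) * (1 - C (ξ n))^2 * h2T
      - C (r n) * (1 - C (ξ n))^2 * h3
      + (- (C (r n) * (1 - C (ξ n)) * (X - C (a n)) * (X - C (b n)) * P (n-1))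
         - (1 - C (ξ n)) * (C (ξ (n+1)) * (X - C (b (n+1))) + C (α n) * X + C (β n)) * P n) * E1
      + (1 - C (ξ n)) * (1 - C (ξ (n+1))) * (X - C (b (n+1))) * P n * E2
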